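/- Let Z be a square-integrable real-valued random variable on a probability space and let z ∈ ℝ be such that P[Z > z] ≤ 1/2 and P[Z ≥ z] > 0. Then z − √(Var(Z)/P[Z ≥ z]) ≤ E[Z] ≤ z + √(2·Var(Z)). -/

import Mathlib

open MeasureTheory ProbabilityTheory

/-- Let `Z` be a square-integrable real random variable on a probability
space and `z : ℝ` with `P[Z > z] ≤ 1/2` and `P[Z ≥ z] > 0`. Then
`z − √(Var(Z)/P[Z ≥ z]) ≤ E[Z] ≤ z + √(2·Var(Z))`. -/
theorem stmt0 {Ω : Type*} [MeasureSpace Ω] [IsProbabilityMeasure (ℙ : Measure Ω)]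
    (Z : Ω → ℝ) (hZ : MemLp Z 2 ℙ) (z : ℝ)
    (h1 : (ℙ {ω | z < Z ω}).toReal ≤ 1 / 2)
    (h2 : 0 < (ℙ {ω | z ≤ Z ω}).toReal) :
    z - Real.sqrt (variance Z ℙ / (ℙ {ω | z ≤ Z ω}).toReal) ≤ (∫ ω, Z ω) ∧
      (∫ ω, Z ω) ≤ z + Real.sqrt (2 * variance Z ℙ) := by
  set μ : ℝ := ∫ ω, Z ω with hμ
  have hVar : 0 ≤ variance Z ℙ := variance_nonneg Z ℙ
  constructor
  · -- lower bound
    rcases le_or_gt z μ with h | h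
    · have : 0 ≤ Real.sqrt (variance Z ℙ / (ℙ {ω | z ≤ Z ω}).toReal) := Real.sqrt_nonneg _
      linarith
    · -- μ < z
      set p := (ℙ {ω | z ≤ Z ω}).toReal with hp
      have hc : 0 < z - μ := by linarith
      have hsub : {ω | z ≤ Z ω} ⊆ {ω | z - μ ≤ |Z ω - μ|} := by
        intro ω hω
        simp only [Set.mem_setOf_eq] at hω ⊢
        have : z - μ ≤ Z ω - μ := by linarith
        exact this.trans (le_abs_self _)
      have hcheb := meas_ge_le_variance_div_sq (μ := ℙ) hZ hc
      have hmono : ℙ {ω | z ≤ Z ω} ≤ ENNReal.ofReal (variance Z ℙ / (z - μ) ^ 2) :=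
        le_trans (measure_mono hsub) hcheb
      have hple : p ≤ variance Z ℙ / (z - μ) ^ 2 := by
        have := ENNReal.toReal_mono (by simp) hmono
        rwa [ENNReal.toReal_ofReal (by positivity)] at this
      have hsq : (z - μ) ^ 2 ≤ variance Z ℙ / p := by
        rw [le_div_iff₀ h2]
        calc (z - μ) ^ 2 * p ≤ (z - μ) ^ 2 * (variance Z ℙ / (z - μ) ^ 2) := by
              apply mul_le_mul_of_nonneg_left hple (by positivity)
          _ = variance Z ℙ := by field_simp
      have : z - μ ≤ Real.sqrt (variance Z ℙ / p) := Real.le_sqrt_of_sq_le hsq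
      linarith
  · -- upper bound
    rcases le_or_gt μ z with h | h
    · have : 0 ≤ Real.sqrt (2 * variance Z ℙ) := Real.sqrt_nonneg _
      linarith
    · -- z < μ
      have hc : 0 < μ - z := by linarith
      have hsub : {ω | Z ω ≤ z} ⊆ {ω | μ - z ≤ |Z ω - μ|} := by
        intro ω hω
        simp only [Set.mem_setOf_eq] at hω ⊢
        have : μ - z ≤ -(Z ω - μ) := by linarith
        exact this.trans (neg_le_abs _)
      have hcheb := meas_ge_le_variance_div_sq (μ := ℙ) hZ hc
      have hmono : ℙ {ω | Z ω ≤ z} ≤ ENNReal.ofReal (variance Z ℙ / (μ - z) ^ 2) :=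
        le_trans (measure_mono hsub) hcheb
      have hple : (ℙ {ω | Z ω ≤ z}).toReal ≤ variance Z ℙ / (μ - z) ^ 2 := by
        have := ENNReal.toReal_mono (by simp) hmono
        rwa [ENNReal.toReal_ofReal (by positivity)] at this
      -- ℙ {Z ≤ z} ≥ 1/2
      have hcompl : (1 : ℝ) ≤ (ℙ {ω | Z ω ≤ z}).toReal + (ℙ {ω | z < Z ω}).toReal := by
        have hu : (Set.univ : Set Ω) ⊆ {ω | Z ω ≤ z} ∪ {ω | z < Z ω} := by
          intro ω _
          rcases le_or_gt (Z ω) z with h' | h'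
          · exact Or.inl h'
          · exact Or.inr h'
        have := (measure_mono hu).trans (measure_union_le (μ := ℙ) _ _)
        have h1' := ENNReal.toReal_mono
          (a := ℙ (Set.univ : Set Ω))
          (by
            exact ENNReal.add_ne_top.mpr ⟨measure_ne_top _ _, measure_ne_top _ _⟩) this
        rw [measure_univ, ENNReal.toReal_one,
          ENNReal.toReal_add (measure_ne_top _ _) (measure_ne_top _ _)] at h1'
        exact h1'
      have hhalf : (1 : ℝ) / 2 ≤ (ℙ {ω | Z ω ≤ z}).toReal := by linarith
      have hsq : (μ - z) ^ 2 ≤ 2 * variance Z ℙ := by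
        have : (1 : ℝ) / 2 ≤ variance Z ℙ / (μ - z) ^ 2 := le_trans hhalf hple
        rw [div_le_div_iff₀ (by norm_num) (by positivity)] at this
        linarith
      have : μ - z ≤ Real.sqrt (2 * variance Z ℙ) := Real.le_sqrt_of_sq_le hsq
      linarith
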